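/- There exists a constant C ≥ 1 depending only on q₁, …, q_d (and n) such that for every ε ∈ (0,1] and every Borel measurable function g : Ω → [0,∞], one has C^{-1} ∫_Ω g dλ ≤ ∫_Ω g(Φ_ε(z)) · ∏_{α=1}^{d} (ε² + |z_α|²)^{q_α} dλ(z) ≤ C ∫_Ω g dλ, where Φ_ε(z) := (F_{ε,q₁}(z₁), …, F_{ε,q_d}(z_d), z_{d+1}, …, z_n). -/

import Mathlib

open Metric Set MeasureTheory
open scoped ENNReal

/-- The change-of-variables map `F_{ε,q}(t) = ((ε² + |t|²)/(1 + ε²))^{q/2} · t` from (2.10). -/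
noncomputable def Feq (ε q : ℝ) (t : ℂ) : ℂ :=
  (((ε ^ 2 + ‖t‖ ^ 2) / (1 + ε ^ 2)) ^ (q / 2) : ℝ) • t

noncomputable def Aeq (ε q s : ℝ) : ℝ := ((ε ^ 2 + s) / (1 + ε ^ 2)) ^ (q / 2)

noncomputable def Beq (ε q s : ℝ) : ℝ :=
  q / 2 * ((ε ^ 2 + s) / (1 + ε ^ 2)) ^ (q / 2 - 1) / (1 + ε ^ 2)

noncomputable def Neq (t : ℂ) : ℂ →L[ℝ] ℝ :=
  (2 * t.re) • Complex.reCLM + (2 * t.im) • Complex.imCLM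

noncomputable def Leq (ε q : ℝ) (t : ℂ) : ℂ →L[ℝ] ℂ :=
  Aeq ε q (Complex.normSq t) • ContinuousLinearMap.id ℝ ℂ
    + (Beq ε q (Complex.normSq t) • Neq t).smulRight t

lemma Feq_eq (ε q : ℝ) (t : ℂ) : Feq ε q t = Aeq ε q (Complex.normSq t) • t := by
  simp [Feq, Aeq, Complex.sq_norm]

lemma hasDerivAt_Aeq {ε : ℝ} (hε : 0 < ε) (q : ℝ) {s : ℝ} (hs : 0 ≤ s) :
    HasDerivAt (Aeq ε q) (Beq ε q s) s := by
  have hu : 0 < (ε ^ 2 + s) / (1 + ε ^ 2) := by positivity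
  have hinner : HasDerivAt (fun s : ℝ => (ε ^ 2 + s) / (1 + ε ^ 2)) (1 / (1 + ε ^ 2)) s := by
    simpa using ((hasDerivAt_id s).const_add (ε ^ 2)).div_const (1 + ε ^ 2)
  have houter := Real.hasDerivAt_rpow_const (x := (ε ^ 2 + s) / (1 + ε ^ 2)) (p := q / 2)
    (Or.inl hu.ne')
  have := houter.comp s hinner
  refine this.congr_deriv ?_
  simp [Beq]
  ring

lemma hasFDerivAt_normSq (t : ℂ) : HasFDerivAt Complex.normSq (Neq t) t := by
  have h := ((Complex.reCLM.hasFDerivAt (x := t)).mul' Complex.reCLM.hasFDerivAt).add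
      ((Complex.imCLM.hasFDerivAt (x := t)).mul' Complex.imCLM.hasFDerivAt)
  have hfun : (fun z : ℂ => Complex.reCLM z * Complex.reCLM z
      + Complex.imCLM z * Complex.imCLM z) = Complex.normSq := by
    funext z; simp [Complex.normSq_apply]
  rw [show (⇑Complex.reCLM * ⇑Complex.reCLM + ⇑Complex.imCLM * ⇑Complex.imCLM : ℂ → ℝ)
      = Complex.normSq from hfun] at h
  refine h.congr_fderiv ?_
  ext1 z
  simp [Neq]
  ring

lemma hasFDerivAt_Feq {ε : ℝ} (hε : 0 < ε) (q : ℝ) (t : ℂ) :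
    HasFDerivAt (Feq ε q) (Leq ε q t) t := by
  have hc : HasFDerivAt (fun z : ℂ => Aeq ε q (Complex.normSq z))
      (Beq ε q (Complex.normSq t) • Neq t) t :=
    (hasDerivAt_Aeq hε q (Complex.normSq_nonneg t)).comp_hasFDerivAt t (hasFDerivAt_normSq t)
  have h := hc.smul (hasFDerivAt_id t)
  have : Feq ε q = fun z : ℂ => Aeq ε q (Complex.normSq z) • z := by
    funext z; exact Feq_eq ε q z
  rw [this]
  exact h

noncomputable def Deq (ε q s : ℝ) : ℝ :=
  (ε ^ 2 + s) ^ (q - 1) * ((ε ^ 2 + s) + q * s) / (1 + ε ^ 2) ^ q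

lemma det_Leq_aux (ε q : ℝ) (t : ℂ) :
    (Leq ε q t).det =
      Aeq ε q (Complex.normSq t) ^ 2
        + 2 * Complex.normSq t * Aeq ε q (Complex.normSq t) * Beq ε q (Complex.normSq t) := by
  have : (Leq ε q t).det = LinearMap.det ((Leq ε q t) : ℂ →ₗ[ℝ] ℂ) := rfl
  rw [this, ← LinearMap.det_toMatrix Complex.basisOneI, Matrix.det_fin_two]
  simp [LinearMap.toMatrix_apply, Complex.coe_basisOneI_repr, Complex.coe_basisOneI,
    Leq, Neq, Complex.normSq_apply]
  ring

lemma det_Leq {ε : ℝ} (hε : 0 < ε) (q : ℝ) (t : ℂ) :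
    (Leq ε q t).det = Deq ε q (Complex.normSq t) := by
  rw [det_Leq_aux]
  set s := Complex.normSq t with hs'
  have hs : 0 ≤ s := Complex.normSq_nonneg t
  have hP : (0:ℝ) < 1 + ε ^ 2 := by positivity
  have hu : (0:ℝ) < ε ^ 2 + s := by positivity
  set v : ℝ := (ε ^ 2 + s) / (1 + ε ^ 2) with hv'
  have hv : (0:ℝ) < v := by positivity
  have ha2 : Aeq ε q s ^ 2 = v ^ q := by
    rw [Aeq, ← Real.rpow_natCast (v ^ (q / 2)) 2, ← Real.rpow_mul hv.le]
    norm_num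
  have hab : Aeq ε q s * Beq ε q s = q / 2 * v ^ (q - 1) / (1 + ε ^ 2) := by
    rw [Aeq, Beq]
    have : v ^ (q / 2) * v ^ (q / 2 - 1) = v ^ (q - 1) := by
      rw [← Real.rpow_add hv]; congr 1; ring
    field_simp
    rw [show (q - 2) / 2 = q / 2 - 1 by ring, mul_assoc, ← hv', this]
  have hvq : v ^ q = v ^ (q - 1) * v := by
    nth_rewrite 1 [show q = (q - 1) + 1 by ring]
    rw [Real.rpow_add hv, Real.rpow_one]
  have huv : (ε ^ 2 + s) ^ (q - 1) = v ^ (q - 1) * (1 + ε ^ 2) ^ (q - 1) := by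
    rw [hv', Real.div_rpow hu.le hP.le]
    field_simp [Real.rpow_natCast]
  have hPq : (1 + ε ^ 2) ^ q = (1 + ε ^ 2) ^ (q - 1) * (1 + ε ^ 2) := by
    nth_rewrite 1 [show q = (q - 1) + 1 by ring]
    rw [Real.rpow_add hP, Real.rpow_one]
  have hvP : v * (1 + ε ^ 2) = ε ^ 2 + s := by
    rw [hv']; field_simp
  rw [Deq, huv, hPq]
  have h1 : Aeq ε q s ^ 2 + 2 * s * Aeq ε q s * Beq ε q s
      = v ^ (q - 1) * v + s * q * v ^ (q - 1) / (1 + ε ^ 2) := by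
    rw [ha2, hvq]
    rw [mul_assoc (2 * s), hab]
    ring
  rw [h1]
  have hPq1 : (0:ℝ) < (1 + ε ^ 2) ^ (q - 1) := Real.rpow_pos_of_pos hP _
  field_simp
  linear_combination hvP

lemma Deq_pos {ε q s : ℝ} (hε : 0 < ε) (hq : 0 < q) (hs : 0 ≤ s) : 0 < Deq ε q s := by
  have hu : (0:ℝ) < ε ^ 2 + s := by positivity
  have h1 : (0:ℝ) < (ε ^ 2 + s) ^ (q - 1) := Real.rpow_pos_of_pos hu _
  have h2 : (0:ℝ) < (1 + ε ^ 2) ^ q := Real.rpow_pos_of_pos (by positivity) _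
  have h3 : (0:ℝ) < (ε ^ 2 + s) + q * s := by positivity
  exact div_pos (mul_pos h1 h3) h2

/-- The per-coordinate comparison constant. -/
noncomputable def Cq (q : ℝ) : ℝ := (1 + q) * 2 ^ q

lemma one_le_Cq {q : ℝ} (hq : 0 < q) : 1 ≤ Cq q := by
  have h1 : (1:ℝ) ≤ 1 + q := by linarith
  have h2 : (1:ℝ) ≤ 2 ^ q := Real.one_le_rpow (by norm_num) hq.le
  calc (1:ℝ) = 1 * 1 := by ring
  _ ≤ (1 + q) * 2 ^ q := by gcongr

lemma weight_le_Cq_mul_Deq {ε q s : ℝ} (hε : 0 < ε) (hε1 : ε ≤ 1) (hq : 0 < q)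
    (hs : 0 ≤ s) : (ε ^ 2 + s) ^ q ≤ Cq q * Deq ε q s := by
  have hu : (0:ℝ) < ε ^ 2 + s := by positivity
  have h1 : (0:ℝ) < (ε ^ 2 + s) ^ (q - 1) := Real.rpow_pos_of_pos hu _
  have h2q : (0:ℝ) < (2:ℝ) ^ q := Real.rpow_pos_of_pos (by norm_num) _
  have hPle : (1 + ε ^ 2 : ℝ) ^ q ≤ 2 ^ q := by
    apply Real.rpow_le_rpow (by positivity) (by nlinarith) hq.le
  have huq : (ε ^ 2 + s) ^ q = (ε ^ 2 + s) ^ (q - 1) * (ε ^ 2 + s) := by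
    nth_rewrite 1 [show q = (q - 1) + 1 by ring]
    rw [Real.rpow_add hu, Real.rpow_one]
  have key : (ε ^ 2 + s) ^ (q - 1) * (ε ^ 2 + s) / 2 ^ q ≤ Deq ε q s := by
    rw [Deq]
    apply div_le_div₀ (by positivity)
      (mul_le_mul_of_nonneg_left (by nlinarith [mul_nonneg hq.le hs]) h1.le)
      (Real.rpow_pos_of_pos (by positivity) q) hPle
  calc (ε ^ 2 + s) ^ q ≤ (1 + q) * (ε ^ 2 + s) ^ q := by
        nlinarith [Real.rpow_pos_of_pos hu q]
  _ = (1 + q) * 2 ^ q * ((ε ^ 2 + s) ^ (q - 1) * (ε ^ 2 + s) / 2 ^ q) := by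
        rw [huq]; field_simp
  _ ≤ (1 + q) * 2 ^ q * Deq ε q s :=
        mul_le_mul_of_nonneg_left key (by positivity)
  _ = Cq q * Deq ε q s := by rw [Cq]

lemma Deq_le_Cq_mul_weight {ε q s : ℝ} (hε : 0 < ε) (hq : 0 < q)
    (hs : 0 ≤ s) : Deq ε q s ≤ Cq q * (ε ^ 2 + s) ^ q := by
  have hu : (0:ℝ) < ε ^ 2 + s := by positivity
  have h1 : (0:ℝ) < (ε ^ 2 + s) ^ (q - 1) := Real.rpow_pos_of_pos hu _
  have h2q : (1:ℝ) ≤ (2:ℝ) ^ q := Real.one_le_rpow (by norm_num) hq.le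
  have hP1 : (1:ℝ) ≤ (1 + ε ^ 2 : ℝ) ^ q := Real.one_le_rpow (by nlinarith) hq.le
  have huq : (ε ^ 2 + s) ^ q = (ε ^ 2 + s) ^ (q - 1) * (ε ^ 2 + s) := by
    nth_rewrite 1 [show q = (q - 1) + 1 by ring]
    rw [Real.rpow_add hu, Real.rpow_one]
  calc Deq ε q s ≤ (ε ^ 2 + s) ^ (q - 1) * ((ε ^ 2 + s) + q * s) / 1 := by
        rw [Deq]; apply div_le_div₀ (by positivity) le_rfl one_pos hP1
  _ = (ε ^ 2 + s) ^ (q - 1) * ((ε ^ 2 + s) + q * s) := by ring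
  _ ≤ (ε ^ 2 + s) ^ (q - 1) * ((ε ^ 2 + s) + q * (ε ^ 2 + s)) := by
        apply mul_le_mul_of_nonneg_left _ h1.le
        nlinarith [mul_nonneg hq.le hs]
  _ = (1 + q) * ((ε ^ 2 + s) ^ (q - 1) * (ε ^ 2 + s)) := by ring
  _ = (1 + q) * (ε ^ 2 + s) ^ q := by rw [huq]
  _ ≤ Cq q * (ε ^ 2 + s) ^ q := by
      rw [Cq]
      have h3 : (0:ℝ) < (ε ^ 2 + s) ^ q := Real.rpow_pos_of_pos hu _
      nlinarith [mul_nonneg (mul_nonneg (show (0:ℝ) ≤ 1 + q by linarith) h3.le)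
        (sub_nonneg.2 h2q)]

lemma Aeq_pos {ε q : ℝ} (hε : 0 < ε) {s : ℝ} (hs : 0 ≤ s) : 0 < Aeq ε q s :=
  Real.rpow_pos_of_pos (by positivity) _

lemma Aeq_mono {ε q : ℝ} (hε : 0 < ε) (hq : 0 < q) {s₁ s₂ : ℝ} (h0 : 0 ≤ s₁) (h : s₁ ≤ s₂) :
    Aeq ε q s₁ ≤ Aeq ε q s₂ := by
  apply Real.rpow_le_rpow (by positivity) _ (by positivity)
  gcongr

lemma Feq_injective {ε q : ℝ} (hε : 0 < ε) (hq : 0 < q) :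
    Function.Injective (Feq ε q) := by
  have key : ∀ t₁ t₂ : ℂ, ‖t₁‖ ≤ ‖t₂‖ → Feq ε q t₁ = Feq ε q t₂ →
      t₁ = t₂ := by
    intro t₁ t₂ habs heq
    rw [Feq_eq, Feq_eq] at heq
    have hA₁ := Aeq_pos (q := q) hε (Complex.normSq_nonneg t₁)
    have hA₂ := Aeq_pos (q := q) hε (Complex.normSq_nonneg t₂)
    have hAle : Aeq ε q (Complex.normSq t₁) ≤ Aeq ε q (Complex.normSq t₂) := by
      apply Aeq_mono hε hq (Complex.normSq_nonneg t₁)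
      rw [← Complex.sq_norm, ← Complex.sq_norm]
      gcongr <;> exact norm_nonneg t₁
    have habs2 : Aeq ε q (Complex.normSq t₁) * ‖t₁‖
        = Aeq ε q (Complex.normSq t₂) * ‖t₂‖ := by
      have h := congrArg norm heq
      simpa [norm_smul, Real.norm_eq_abs, abs_of_pos hA₁,
        abs_of_pos hA₂] using h
    have habs_eq : ‖t₁‖ = ‖t₂‖ := by
      apply le_antisymm habs
      by_contra hlt
      push_neg at hlt
      nlinarith [mul_pos hA₂ (sub_pos.2 hlt),
        mul_nonneg (sub_nonneg.2 hAle) (norm_nonneg t₁)]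
    have hAeq : Aeq ε q (Complex.normSq t₁) = Aeq ε q (Complex.normSq t₂) := by
      rw [Complex.normSq_eq_norm_sq, Complex.normSq_eq_norm_sq, habs_eq]
    rw [hAeq] at heq
    exact smul_right_injective ℂ hA₂.ne' heq
  intro t₁ t₂ heq
  rcases le_total (‖t₁‖) (‖t₂‖) with h | h
  · exact key t₁ t₂ h heq
  · exact (key t₂ t₁ h heq.symm).symm

lemma Aeq_nonneg (ε q : ℝ) {s : ℝ} (hs : 0 ≤ s) : 0 ≤ Aeq ε q s :=
  Real.rpow_nonneg (by positivity) _

lemma abs_Feq (ε q : ℝ) (t : ℂ) :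
    ‖Feq ε q t‖ = Aeq ε q (Complex.normSq t) * ‖t‖ := by
  rw [Feq_eq, norm_smul, Real.norm_eq_abs,
    abs_of_nonneg (Aeq_nonneg ε q (Complex.normSq_nonneg t))]

lemma Aeq_le_one {ε q : ℝ} (hε : 0 < ε) (hq : 0 < q) {s : ℝ} (hs0 : 0 ≤ s) (hs1 : s ≤ 1) :
    Aeq ε q s ≤ 1 := by
  apply Real.rpow_le_one (by positivity) _ (by positivity)
  rw [div_le_one (by positivity)]
  linarith

lemma abs_Feq_lt_one {ε q : ℝ} (hε : 0 < ε) (hq : 0 < q) {t : ℂ}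
    (ht : ‖t‖ < 1) : ‖Feq ε q t‖ < 1 := by
  rw [abs_Feq]
  calc Aeq ε q (Complex.normSq t) * ‖t‖ ≤ 1 * ‖t‖ := by
        apply mul_le_mul_of_nonneg_right _ (norm_nonneg t)
        apply Aeq_le_one hε hq (Complex.normSq_nonneg t)
        rw [← Complex.sq_norm]
        nlinarith [norm_nonneg t]
  _ < 1 := by rwa [one_mul]

lemma Feq_surjOn {ε q : ℝ} (hε : 0 < ε) (hq : 0 < q) {w : ℂ} (hw : ‖w‖ < 1) :
    ∃ t : ℂ, ‖t‖ < 1 ∧ Feq ε q t = w := by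
  rcases eq_or_ne w 0 with rfl | hw0
  · exact ⟨0, by simpa using one_pos, by simp [Feq]⟩
  have hwpos : 0 < ‖w‖ := norm_pos_iff.mpr hw0
  -- IVT for G r = Aeq (r^2) * r on [0,1]
  set G : ℝ → ℝ := fun r => Aeq ε q (r ^ 2) * r with hG
  have hcont : ContinuousOn G (Icc 0 1) := by
    apply ContinuousOn.mul _ continuousOn_id
    apply ContinuousOn.rpow_const
    · fun_prop
    · intro x _
      right
      positivity
  have hG0 : G 0 = 0 := by simp [hG]
  have hG1 : G 1 = 1 := by
    simp only [hG, Aeq, one_pow, mul_one]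
    rw [add_comm (ε ^ 2) 1, div_self (by positivity), Real.one_rpow]
  have hmem : ‖w‖ ∈ Icc (G 0) (G 1) := by
    rw [hG0, hG1]; exact ⟨hwpos.le, hw.le⟩
  obtain ⟨r, hr, hGr⟩ := intermediate_value_Icc (by norm_num) hcont hmem
  have hr1 : r < 1 := by
    rcases lt_or_eq_of_le hr.2 with h | h
    · exact h
    · exfalso; rw [h, hG1] at hGr; exact hw.ne' hGr
  have habs_t : ‖(r / ‖w‖ : ℝ) • w‖ = r := by
    rw [norm_smul, Real.norm_eq_abs,
      abs_of_nonneg (div_nonneg hr.1 hwpos.le), div_mul_cancel₀ _ hwpos.ne']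
  refine ⟨(r / ‖w‖ : ℝ) • w, ?_, ?_⟩
  · rw [habs_t]; exact hr1
  · rw [Feq_eq]
    have hns : Complex.normSq ((r / ‖w‖ : ℝ) • w) = r ^ 2 := by
      rw [Complex.normSq_eq_norm_sq, habs_t]
    rw [hns, smul_smul]
    have h1 : Aeq ε q (r ^ 2) * (r / ‖w‖) = 1 := by
      rw [show Aeq ε q (r ^ 2) * (r / ‖w‖)
          = (Aeq ε q (r ^ 2) * r) / ‖w‖ by ring]
      rw [show Aeq ε q (r ^ 2) * r = G r from rfl, hGr, div_self hwpos.ne']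
    rw [h1, one_smul]

lemma det_clm_pi {n : ℕ} (L : Fin n → (ℂ →L[ℝ] ℂ)) :
    (ContinuousLinearMap.pi
      (fun i => (L i).comp (ContinuousLinearMap.proj i)) :
        (Fin n → ℂ) →L[ℝ] (Fin n → ℂ)).det = ∏ i, (L i).det := by
  classical
  let e : ((_ : Fin n) × Fin 2) ≃ (Fin 2 × Fin n) :=
    (Equiv.sigmaEquivProd (Fin n) (Fin 2)).trans (Equiv.prodComm _ _)
  let B : Module.Basis (Fin 2 × Fin n) ℝ (Fin n → ℂ) :=
    (Pi.basis fun _ : Fin n => Complex.basisOneI).reindex e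
  have hdet : (ContinuousLinearMap.pi
      (fun i => (L i).comp (ContinuousLinearMap.proj i)) :
        (Fin n → ℂ) →L[ℝ] (Fin n → ℂ)).det
      = LinearMap.det ((ContinuousLinearMap.pi
      (fun i => (L i).comp (ContinuousLinearMap.proj i)) :
        (Fin n → ℂ) →L[ℝ] (Fin n → ℂ)) : (Fin n → ℂ) →ₗ[ℝ] (Fin n → ℂ)) := rfl
  rw [hdet, ← LinearMap.det_toMatrix B]
  have hM : (LinearMap.toMatrix B B) ((ContinuousLinearMap.pi
      (fun i => (L i).comp (ContinuousLinearMap.proj i)) :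
        (Fin n → ℂ) →L[ℝ] (Fin n → ℂ)) : (Fin n → ℂ) →ₗ[ℝ] (Fin n → ℂ))
      = Matrix.blockDiagonal
          (fun i => LinearMap.toMatrix Complex.basisOneI Complex.basisOneI (L i)) := by
    ext ⟨a, i⟩ ⟨b, j⟩
    rw [LinearMap.toMatrix_apply, Matrix.blockDiagonal_apply]
    have hB : B (b, j) = Pi.single j (Complex.basisOneI b) := by
      simp only [B, Module.Basis.reindex_apply]
      have : e.symm (b, j) = ⟨j, b⟩ := rfl
      rw [this, Pi.basis_apply]
    have hrepr : ∀ y : Fin n → ℂ, B.repr y (a, i) = Complex.basisOneI.repr (y i) a := by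
      intro y
      simp only [B, Module.Basis.repr_reindex_apply]
      have : e.symm (a, i) = ⟨i, a⟩ := rfl
      rw [this, Pi.basis_repr]
    rw [hB, hrepr]
    have happ : ((ContinuousLinearMap.pi
        (fun i => (L i).comp (ContinuousLinearMap.proj i)) :
          (Fin n → ℂ) →L[ℝ] (Fin n → ℂ)) : (Fin n → ℂ) →ₗ[ℝ] (Fin n → ℂ))
          (Pi.single j (Complex.basisOneI b)) i
        = L i ((Pi.single j (Complex.basisOneI b) : Fin n → ℂ) i) := by
      simp [ContinuousLinearMap.pi_apply, ContinuousLinearMap.proj_apply]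
    rw [happ]
    by_cases hij : i = j
    · subst hij
      rw [Pi.single_eq_same, if_pos rfl, LinearMap.toMatrix_apply]
      rfl
    · rw [Pi.single_eq_of_ne hij, if_neg hij, map_zero, map_zero]
      rfl
  rw [hM, Matrix.det_blockDiagonal]
  exact Finset.prod_congr rfl fun i _ => LinearMap.det_toMatrix _ _


/-- The change-of-variables estimate (2.13): on the unit polydisk `Ω ⊂ ℂⁿ`, with
`Φ_ε(z) = (F_{ε,q₁}(z₁), …, F_{ε,q_d}(z_d), z_{d+1}, …, z_n)`, there is `C ≥ 1` depending
only on the exponents such that for all `ε ∈ (0,1]` and Borel `g : Ω → [0,∞]`,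
`C⁻¹ ∫_Ω g ≤ ∫_Ω g(Φ_ε z) ∏_{α≤d} (ε² + |z_α|²)^{q_α} dλ(z) ≤ C ∫_Ω g`. -/
theorem stmt_3 (n d : ℕ) (hd1 : 1 ≤ d) (hdn : d ≤ n) (q : Fin n → ℝ)
    (hq : ∀ i : Fin n, (i : ℕ) < d → 0 < q i) :
    ∃ C : ℝ, 1 ≤ C ∧ ∀ ε ∈ Set.Ioc (0 : ℝ) 1,
      ∀ g : (Fin n → ℂ) → ℝ≥0∞, Measurable g →
        ENNReal.ofReal C⁻¹ * (∫⁻ z in {z : Fin n → ℂ | ∀ i, ‖z i‖ < 1}, g z) ≤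
          (∫⁻ z in {z : Fin n → ℂ | ∀ i, ‖z i‖ < 1},
            g (fun i => if (i : ℕ) < d then Feq ε (q i) (z i) else z i) *
              ENNReal.ofReal
                (∏ i ∈ Finset.univ.filter (fun i : Fin n => (i : ℕ) < d),
                  (ε ^ 2 + ‖z i‖ ^ 2) ^ (q i))) ∧
        (∫⁻ z in {z : Fin n → ℂ | ∀ i, ‖z i‖ < 1},
            g (fun i => if (i : ℕ) < d then Feq ε (q i) (z i) else z i) *
              ENNReal.ofReal
                (∏ i ∈ Finset.univ.filter (fun i : Fin n => (i : ℕ) < d),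
                  (ε ^ 2 + ‖z i‖ ^ 2) ^ (q i))) ≤
          ENNReal.ofReal C * (∫⁻ z in {z : Fin n → ℂ | ∀ i, ‖z i‖ < 1}, g z) := by
  classical
  set F := Finset.univ.filter (fun i : Fin n => (i : ℕ) < d) with hF
  refine ⟨∏ i ∈ F, Cq (q i), ?_, ?_⟩
  · calc (1:ℝ) = ∏ _i ∈ F, (1:ℝ) := by simp
    _ ≤ ∏ i ∈ F, Cq (q i) := Finset.prod_le_prod (fun _ _ => zero_le_one)
        (fun i hi => one_le_Cq (hq i (Finset.mem_filter.1 hi).2))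
  set C : ℝ := ∏ i ∈ F, Cq (q i) with hCdef
  have hC1 : 1 ≤ C := by
    calc (1:ℝ) = ∏ _i ∈ F, (1:ℝ) := by simp
    _ ≤ ∏ i ∈ F, Cq (q i) := Finset.prod_le_prod (fun _ _ => zero_le_one)
        (fun i hi => one_le_Cq (hq i (Finset.mem_filter.1 hi).2))
  have hC0 : 0 < C := lt_of_lt_of_le one_pos hC1
  rintro ε ⟨hε0, hε1⟩ g hg
  set S : Set (Fin n → ℂ) := {z | ∀ i, ‖z i‖ < 1} with hSdef
  have hSopen : IsOpen S := by
    have : S = Set.pi univ (fun _ : Fin n => ball (0 : ℂ) 1) := by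
      ext z
      simp [hSdef, Set.mem_pi, mem_ball_zero_iff]
    rw [this]
    exact isOpen_set_pi finite_univ fun i _ => isOpen_ball
  have hS : MeasurableSet S := hSopen.measurableSet
  set Φ : (Fin n → ℂ) → (Fin n → ℂ) :=
    fun z i => if (i : ℕ) < d then Feq ε (q i) (z i) else z i with hΦdef
  set Φ' : (Fin n → ℂ) → ((Fin n → ℂ) →L[ℝ] (Fin n → ℂ)) :=
    fun z => ContinuousLinearMap.pi
      (fun i => (if (i : ℕ) < d then Leq ε (q i) (z i)
        else ContinuousLinearMap.id ℝ ℂ).comp (ContinuousLinearMap.proj i)) with hΦ'def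
  have hΦderiv : ∀ z, HasFDerivAt Φ (Φ' z) z := by
    intro z
    apply hasFDerivAt_pi''
    intro i
    rw [hΦ'def, ContinuousLinearMap.proj_pi]
    by_cases h : (i : ℕ) < d
    · simp only [hΦdef, if_pos h]
      exact (hasFDerivAt_Feq hε0 (q i) (z i)).comp z (hasFDerivAt_apply (𝕜 := ℝ) i z)
    · simp only [hΦdef, if_neg h, ContinuousLinearMap.id_comp]
      exact hasFDerivAt_apply (𝕜 := ℝ) i z
  set J : (Fin n → ℂ) → ℝ := fun z => ∏ i ∈ F, Deq ε (q i) (‖z i‖ ^ 2) with hJdef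
  have hJ : ∀ z, (Φ' z).det = J z := by
    intro z
    rw [hΦ'def, det_clm_pi]
    simp only [hJdef, hF, Finset.prod_filter]
    refine Finset.prod_congr rfl fun i _ => ?_
    by_cases h : (i : ℕ) < d
    · rw [if_pos h, if_pos h, det_Leq hε0, Complex.sq_norm]
    · rw [if_neg h, if_neg h]
      show LinearMap.det (ContinuousLinearMap.id ℝ ℂ : ℂ →ₗ[ℝ] ℂ) = 1
      rw [ContinuousLinearMap.coe_id, LinearMap.det_id]
  have hJpos : ∀ z, 0 < J z := fun z =>
    Finset.prod_pos fun i hi =>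
      Deq_pos hε0 (hq i (Finset.mem_filter.1 hi).2) (by positivity)
  set W : (Fin n → ℂ) → ℝ :=
    fun z => ∏ i ∈ F, (ε ^ 2 + ‖z i‖ ^ 2) ^ (q i) with hWdef
  have hW0 : ∀ z, 0 ≤ W z := fun z =>
    Finset.prod_nonneg fun i _ => Real.rpow_nonneg (by positivity) _
  have hWle : ∀ z, W z ≤ C * J z := by
    intro z
    calc W z ≤ ∏ i ∈ F, Cq (q i) * Deq ε (q i) (‖z i‖ ^ 2) := by
          apply Finset.prod_le_prod (fun i _ => Real.rpow_nonneg (by positivity) _)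
          exact fun i hi => weight_le_Cq_mul_Deq hε0 hε1 (hq i (Finset.mem_filter.1 hi).2)
            (by positivity)
    _ = C * J z := by rw [hCdef, hJdef, Finset.prod_mul_distrib]
  have hJle : ∀ z, J z ≤ C * W z := by
    intro z
    calc J z ≤ ∏ i ∈ F, Cq (q i) * (ε ^ 2 + ‖z i‖ ^ 2) ^ (q i) := by
          apply Finset.prod_le_prod
            (fun i hi => (Deq_pos hε0 (hq i (Finset.mem_filter.1 hi).2) (by positivity)).le)
          exact fun i hi => Deq_le_Cq_mul_weight hε0 (hq i (Finset.mem_filter.1 hi).2)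
            (by positivity)
    _ = C * W z := by rw [hCdef, hWdef, Finset.prod_mul_distrib]
  have hinj : InjOn Φ S := by
    intro z₁ _ z₂ _ h
    funext i
    have hi := congrFun h i
    by_cases hlt : (i : ℕ) < d
    · simp only [hΦdef, if_pos hlt] at hi
      exact Feq_injective hε0 (hq i hlt) hi
    · simpa [hΦdef, if_neg hlt] using hi
  have himg : Φ '' S = S := by
    ext w
    constructor
    · rintro ⟨z, hz, rfl⟩ i
      by_cases hlt : (i : ℕ) < d
      · simp only [hΦdef, if_pos hlt]
        exact abs_Feq_lt_one hε0 (hq i hlt) (hz i)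
      · simpa [hΦdef, if_neg hlt] using hz i
    · intro hw
      choose t ht1 ht2 using fun (i : Fin n) (h : (i : ℕ) < d) =>
        Feq_surjOn hε0 (hq i h) (hw i)
      refine ⟨fun i => if h : (i : ℕ) < d then t i h else w i, fun i => ?_, funext fun i => ?_⟩
      · by_cases h : (i : ℕ) < d
        · simpa [h] using ht1 i h
        · simpa [h] using hw i
      · by_cases h : (i : ℕ) < d
        · simpa [hΦdef, h] using ht2 i h
        · simp [hΦdef, h]
  have cov := lintegral_image_eq_lintegral_abs_det_fderiv_mul volume hS
    (fun x _ => (hΦderiv x).hasFDerivWithinAt) hinj g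
  rw [himg] at cov
  have habs : ∀ z, ENNReal.ofReal |(Φ' z).det| = ENNReal.ofReal (J z) := by
    intro z
    rw [hJ, abs_of_pos (hJpos z)]
  constructor
  · -- lower bound
    have step : (∫⁻ z in S, g z) ≤ ENNReal.ofReal C *
        ∫⁻ z in S, g (Φ z) * ENNReal.ofReal (W z) := by
      rw [cov, ← lintegral_const_mul' _ _ ENNReal.ofReal_ne_top]
      apply lintegral_mono
      intro z
      simp only [habs]
      calc ENNReal.ofReal (J z) * g (Φ z)
          ≤ (ENNReal.ofReal C * ENNReal.ofReal (W z)) * g (Φ z) := by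
            apply mul_le_mul_left
            rw [← ENNReal.ofReal_mul hC0.le]
            exact ENNReal.ofReal_le_ofReal (hJle z)
        _ = ENNReal.ofReal C * (g (Φ z) * ENNReal.ofReal (W z)) := by
            rw [mul_assoc, mul_comm (ENNReal.ofReal (W z))]
    calc ENNReal.ofReal C⁻¹ * ∫⁻ z in S, g z
        ≤ ENNReal.ofReal C⁻¹ * (ENNReal.ofReal C *
            ∫⁻ z in S, g (Φ z) * ENNReal.ofReal (W z)) := mul_le_mul_right step _
      _ = ∫⁻ z in S, g (Φ z) * ENNReal.ofReal (W z) := by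
          rw [← mul_assoc, ← ENNReal.ofReal_mul (by positivity),
            inv_mul_cancel₀ hC0.ne', ENNReal.ofReal_one, one_mul]
  · -- upper bound
    calc (∫⁻ z in S, g (Φ z) * ENNReal.ofReal (W z))
        ≤ ∫⁻ z in S, ENNReal.ofReal C *
            (ENNReal.ofReal |(Φ' z).det| * g (Φ z)) := by
          apply lintegral_mono
          intro z
          simp only [habs]
          calc g (Φ z) * ENNReal.ofReal (W z)
              ≤ g (Φ z) * (ENNReal.ofReal C * ENNReal.ofReal (J z)) := by
                apply mul_le_mul_right
                rw [← ENNReal.ofReal_mul hC0.le]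
                exact ENNReal.ofReal_le_ofReal (hWle z)
            _ = ENNReal.ofReal C * (ENNReal.ofReal (J z) * g (Φ z)) := by
                ring
      _ = ENNReal.ofReal C * ∫⁻ z in S, ENNReal.ofReal |(Φ' z).det| * g (Φ z) :=
          lintegral_const_mul' _ _ ENNReal.ofReal_ne_top
      _ = ENNReal.ofReal C * ∫⁻ z in S, g z := by rw [← cov]
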